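/- Let G = (V, E) be a finite simple graph and let t : V → ℕ be a threshold function. Define Ψ_G to be the pure Horn CNF consisting of the clauses A → v for every v ∈ V and every subset A ⊆ N(v) with |A| = t(v). Then a set K ⊆ V is a target set of (G, t) if and only if K is a key of the Boolean function defined by Ψ_G. -/
import Mathlib


open scoped Classical

variable {V : Type*} [Fintype V] [DecidableEq V]

/-- A Boolean function `h` on `V` is pure Horn if its set of true assignments contains the
all-true assignment and is closed under componentwise AND. -/
def PureHorn (h : (V → Bool) → Bool) : Prop :=
  h (fun _ => true) = true ∧
  ∀ x y : V → Bool, h x = true → h y = true → h (fun v => x v && y v) = true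

/-- The clause `A → v` is an implicate of `h`: every true assignment of `h` that is true on
every element of `A` is also true at `v`. -/
def Implicate (h : (V → Bool) → Bool) (A : Finset V) (v : V) : Prop :=
  ∀ x : V → Bool, h x = true → (∀ a ∈ A, x a = true) → x v = true

/-- `K` is a key of `h` if `K → v` is an implicate of `h` for every `v ∈ V \ K`. -/
def IsKey (h : (V → Bool) → Bool) (K : Finset V) : Prop :=
  ∀ v ∉ K, Implicate h K v

/-- `𝒦(h)`: the family of inclusion-minimal keys of `h`. -/
def minKeys (h : (V → Bool) → Bool) : Set (Finset V) :=
  {K | IsKey h K ∧ ∀ K', IsKey h K' → K' ⊆ K → K' = K}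

/-- `Φ_𝓑`: the pure Horn function whose true assignments are exactly those `x` such that for
every `B ∈ 𝓑` on which `x` is identically true, `x` is identically true on all of `V`. -/
noncomputable def PhiB (𝓑 : Set (Finset V)) : (V → Bool) → Bool :=
  fun x => decide (∀ B ∈ 𝓑, (∀ u ∈ B, x u = true) → ∀ v : V, x v = true)

/-- `W` is closed under the activation process in `(G, t)`: every vertex having at least
`t v` neighbors in `W` already belongs to `W`. -/
def ActClosed (G : SimpleGraph V) (t : V → ℕ) (W : Finset V) : Prop :=
  ∀ v : V, t v ≤ ({u | G.Adj v u} ∩ (W : Set V)).ncard → v ∈ W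

/-- `S` is a target set of `(G, t)`: the activation closure of `S` (the smallest
activation-closed superset of `S`) is all of `V`, equivalently every activation-closed
superset of `S` is all of `V`. -/
def IsTargetSet (G : SimpleGraph V) (t : V → ℕ) (S : Finset V) : Prop :=
  ∀ W : Finset V, S ⊆ W → ActClosed G t W → W = Finset.univ

/-- The pure Horn CNF `Ψ_G` consisting of the clauses `A → v` for every `v ∈ V` and every
`A ⊆ N(v)` with `|A| = t v`. -/
noncomputable def PsiG (G : SimpleGraph V) (t : V → ℕ) : (V → Bool) → Bool :=
  fun x => decide (∀ v : V, ∀ A : Finset V, (A : Set V) ⊆ {u | G.Adj v u} → A.card = t v →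
    ((∃ a ∈ A, x a = false) ∨ x v = true))


lemma ncard_eq_aux (G : SimpleGraph V) (v : V) (W : Finset V) :
    ({u | G.Adj v u} ∩ (W : Set V)).ncard = (W.filter (fun u => G.Adj v u)).card := by
  rw [← Set.ncard_coe_finset]
  congr 1
  ext u
  simp [and_comm]

/-- `K ⊆ V` is a target set of `(G, t)` iff `K` is a key of the Boolean function defined by
the pure Horn CNF `Ψ_G`. -/
theorem stmt11 (G : SimpleGraph V) (t : V → ℕ) (K : Finset V) :
    IsTargetSet G t K ↔ IsKey (PsiG G t) K := by
  constructor
  · intro hT v hv x hx hK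
    by_contra hxv
    set W : Finset V := Finset.univ.filter (fun u => x u = true) with hW
    have hKW : K ⊆ W := fun a ha => by simp [hW, hK a ha]
    have hx' := of_decide_eq_true hx
    have hclosed : ActClosed G t W := by
      intro w hw
      rw [ncard_eq_aux] at hw
      obtain ⟨A, hAsub, hAcard⟩ := Finset.exists_subset_card_eq hw
      have hcl := hx' w A (fun a ha => (Finset.mem_filter.mp (hAsub ha)).2) hAcard
      rcases hcl with ⟨a, haA, hfa⟩ | h
      · have := hAsub haA
        simp only [hW, Finset.mem_filter, Finset.mem_univ, true_and] at this
        simp [this] at hfa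
      · simp [hW, h]
    have huniv := hT W hKW hclosed
    have hvm : v ∈ W := huniv ▸ Finset.mem_univ v
    simp only [hW, Finset.mem_filter, Finset.mem_univ, true_and] at hvm
    exact hxv hvm
  · intro hK W hKW hcl
    set x : V → Bool := fun u => decide (u ∈ W) with hxdef
    have hx : PsiG G t x = true := by
      apply decide_eq_true
      intro v A hA hcard
      by_cases hvW : v ∈ W
      · right; simp [hxdef, hvW]
      · by_cases hAW : ∀ a ∈ A, a ∈ W
        · exfalso
          apply hvW
          apply hcl
          rw [ncard_eq_aux]
          have hsub : A ⊆ W.filter (fun u => G.Adj v u) :=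
            fun a ha => Finset.mem_filter.mpr ⟨hAW a ha, hA (Finset.mem_coe.mpr ha)⟩
          calc t v = A.card := hcard.symm
            _ ≤ _ := Finset.card_le_card hsub
        · push_neg at hAW
          obtain ⟨a, haA, haW⟩ := hAW
          exact Or.inl ⟨a, haA, by simp [hxdef, haW]⟩
    apply Finset.eq_univ_iff_forall.mpr
    intro v
    by_cases hvK : v ∈ K
    · exact hKW hvK
    · have := hK v hvK x hx (fun a ha => by simp [hxdef, hKW ha])
      simpa [hxdef] using this
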